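/- arXiv:0907.0518 — 4 statements merged into one kernel-verified Lean document; each statement's English description precedes it below -/
import Mathlib

section
/- For every δ > 0 there exists ε > 0 with the following property. Let u : ℝ² → ℝ be twice continuously differentiable and suppose that for every x ∈ ℝ² with |x| ≤ 3/2 one has |u(x)| + ‖Du(x)‖ + ‖D²u(x)‖ ≤ ε. Let Σ = {(x, u(x)) : x ∈ ℝ², |x| ≤ 3/2} ⊂ ℝ³. Suppose γ : [0,1] → ℝ³ is a continuous path with image contained in Σ, of finite length, whose length equals the intrinsic distance d_Σ(γ(0), γ(1)); suppose the orthogonal projections of γ(0) and γ(1) to ℝ² both have norm exactly 1, and that the image of γ meets the open Euclidean ball of radius ε centered at the origin of ℝ³. Then there exists a one-dimensional linear subspace L ⊂ ℝ² such that the Hausdorff distance in ℝ³ between the image of γ and the set {(x, 0) : x ∈ L, |x| ≤ 1} is less than δ. -/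
open scoped ENNReal RealInnerProductSpace
open Set Metric

noncomputable section

/-- Euclidean plane ℝ². -/
abbrev E2 : Type := EuclideanSpace ℝ (Fin 2)

/-- Euclidean space ℝ³, written as pairs (x, y) with x ∈ ℝ² and y ∈ ℝ, with the ℓ²
(Euclidean) norm on the product. -/
abbrev R3 : Type := WithLp 2 (E2 × ℝ)

/-- Orthogonal projection ℝ³ → ℝ², (x, y) ↦ x. -/
def proj1 (p : R3) : E2 := (WithLp.equiv 2 (E2 × ℝ) p).1

/-- Projection onto the last coordinate, (x, y) ↦ y. -/
def proj2 (p : R3) : ℝ := (WithLp.equiv 2 (E2 × ℝ) p).2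

/-- The point (x, y) ∈ ℝ³. -/
def mk3 (x : E2) (y : ℝ) : R3 := (WithLp.equiv 2 (E2 × ℝ)).symm (x, y)

/-- The intrinsic distance in a subset `S` of ℝ³: the infimum of the lengths (total
variations) of continuous paths in `S` joining `p` to `q`. -/
def intrinsicDist (S : Set R3) (p q : R3) : ℝ≥0∞ :=
  ⨅ γ ∈ {γ : ℝ → R3 | ContinuousOn γ (Set.Icc 0 1) ∧ Set.MapsTo γ (Set.Icc 0 1) S ∧
      γ 0 = p ∧ γ 1 = q},
    eVariationOn γ (Set.Icc 0 1)

lemma norm3_sq (p : R3) : ‖p‖^2 = ‖proj1 p‖^2 + (proj2 p)^2 := by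
  have := WithLp.prod_norm_sq_eq_of_L2 p
  simpa [proj1, proj2, sq_abs, Real.norm_eq_abs] using this

lemma norm_proj1_le (p : R3) : ‖proj1 p‖ ≤ ‖p‖ := by
  refine le_of_sq_le_sq ?_ (norm_nonneg _)
  have := norm3_sq p
  nlinarith [sq_nonneg (proj2 p)]

lemma dist_proj1_le (p q : R3) : dist (proj1 p) (proj1 q) ≤ dist p q := by
  rw [dist_eq_norm, dist_eq_norm]
  exact norm_proj1_le (p - q)

lemma norm_mk3_le (x : E2) (y : ℝ) : ‖mk3 x y‖ ≤ ‖x‖ + |y| := by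
  refine le_of_sq_le_sq ?_ (by positivity)
  have h := norm3_sq (mk3 x y)
  have h1 : proj1 (mk3 x y) = x := rfl
  have h2 : proj2 (mk3 x y) = y := rfl
  rw [h1, h2] at h
  nlinarith [norm_nonneg x, abs_nonneg y, sq_abs y]

lemma dist_mk3_le (x x' : E2) (y y' : ℝ) :
    dist (mk3 x y) (mk3 x' y') ≤ ‖x - x'‖ + |y - y'| := by
  rw [dist_eq_norm]
  exact norm_mk3_le (x - x') (y - y')

lemma decomp (a x : E2) (ha : ‖a‖ = 1) (r : ℝ) :
    ‖x - r • a‖^2 = (⟪x, a⟫ - r)^2 + ‖x - ⟪x, a⟫ • a‖^2 := by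
  have h1 : ‖x - r • a‖^2 = ‖x‖^2 - 2 * (r * ⟪x, a⟫) + r^2 := by
    rw [norm_sub_sq_real, real_inner_smul_right, norm_smul]
    simp [ha, Real.norm_eq_abs, sq_abs, mul_pow]
  have h2 : ‖x - ⟪x, a⟫ • a‖^2 = ‖x‖^2 - ⟪x, a⟫^2 := by
    rw [norm_sub_sq_real, real_inner_smul_right, norm_smul]
    simp [ha, Real.norm_eq_abs, sq_abs, mul_pow]
    ring
  rw [h1, h2]; ring

lemma ellipse {A B t w η : ℝ} (hA : 0 ≤ A) (hB : 0 ≤ B) (hA2 : A^2 = (1-t)^2 + w)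
    (hB2 : B^2 = (1+t)^2 + w) (hw : 0 ≤ w) (ht : t^2 ≤ 1) (hη : 0 ≤ η)
    (hsum : A + B ≤ 2 + η) : w ≤ η*(4+η)/4 := by
  have hab : A * B ≥ 1 - t^2 + w := by
    have h1 : (A*B)^2 ≥ (1 - t^2 + w)^2 := by nlinarith [sq_nonneg (1-t^2), sq_nonneg w]
    have h2 : 0 ≤ 1 - t^2 + w := by nlinarith
    nlinarith [mul_nonneg hA hB]
  nlinarith [sq_nonneg (A+B)]

lemma antipodal_aux {d S E : ℝ} (hd0 : 0 ≤ d) (hE : 0 < E) (hE1 : E ≤ 1)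
    (hpar : S*S + d*d = 2*(1*1+1*1)) (hd : 2-2*E ≤ (1+E)*d) : S^2 ≤ 16*E := by
  have hkey : ((1+E)*d)^2 ≥ (2-2*E)^2 := by
    nlinarith [mul_nonneg (by linarith : (0:ℝ) ≤ 1+E) hd0]
  nlinarith [sq_nonneg E, sq_nonneg (E*d), sq_nonneg d]

lemma lip_proj1 : LipschitzWith 1 proj1 :=
  LipschitzWith.of_dist_le_mul (fun p q => by simpa using dist_proj1_le p q)


set_option maxHeartbeats 2000000

/-- Lemma 2.3: minimizing geodesics in almost flat graphs are almost straight.  For every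
`δ > 0` there is `ε > 0` so that if `u` is `C²` with `|u| + ‖Du‖ + ‖D²u‖ ≤ ε` on the disk of
radius 3/2, `Σ` is the graph of `u` over that disk, and `γ` is a finite-length path in `Σ`
whose length realizes the intrinsic distance between its endpoints, whose endpoints project
to the unit circle of ℝ², and which meets the open ball of radius `ε` about the origin, then
the image of `γ` is `δ`-Hausdorff close to `L ∩ D₁(0)` for some line `L` through the origin. -/
theorem stmt_1 (δ : ℝ) (hδ : 0 < δ) :
    ∃ ε : ℝ, 0 < ε ∧
      ∀ u : E2 → ℝ, ContDiff ℝ 2 u →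
        (∀ x : E2, ‖x‖ ≤ 3 / 2 →
          |u x| + ‖fderiv ℝ u x‖ + ‖iteratedFDeriv ℝ 2 u x‖ ≤ ε) →
        ∀ γ : ℝ → R3,
          ContinuousOn γ (Set.Icc 0 1) →
          Set.MapsTo γ (Set.Icc 0 1) {p : R3 | ∃ x : E2, ‖x‖ ≤ 3 / 2 ∧ p = mk3 x (u x)} →
          eVariationOn γ (Set.Icc 0 1) ≠ ⊤ →
          eVariationOn γ (Set.Icc 0 1) =
            intrinsicDist {p : R3 | ∃ x : E2, ‖x‖ ≤ 3 / 2 ∧ p = mk3 x (u x)} (γ 0) (γ 1) →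
          ‖proj1 (γ 0)‖ = 1 → ‖proj1 (γ 1)‖ = 1 →
          (∃ t ∈ Set.Icc (0 : ℝ) 1, ‖γ t‖ < ε) →
          ∃ L : Submodule ℝ E2, Module.finrank ℝ L = 1 ∧
            Metric.hausdorffDist (γ '' Set.Icc 0 1)
              {p : R3 | proj1 p ∈ L ∧ ‖proj1 p‖ ≤ 1 ∧ proj2 p = 0} < δ := by
  set q : ℝ := min δ 1 / 26 with hqdef
  have hq0 : 0 < q := by positivity
  have hq1 : q ≤ 1 / 26 := by
    rw [hqdef]; gcongr; exact min_le_right _ _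
  have hqδ : 26 * q ≤ δ := by
    rw [hqdef]; have := min_le_left δ 1; linarith [min_le_left δ 1]
  refine ⟨q ^ 4, by positivity, ?_⟩
  intro u hu hbound γ hγc hγm hfin hmin ha1 hb1 hnear
  obtain ⟨t₀, ht₀, hnear⟩ := hnear
  set E : ℝ := q ^ 4 with hEdef
  have hE0 : 0 < E := by positivity
  have hqle1 : q ≤ 1 := hq1.trans (by norm_num)
  have hq21 : q ^ 2 ≤ 1 := by nlinarith
  have hEq2 : E ≤ q ^ 2 := by rw [hEdef]; nlinarith [sq_nonneg q]
  have hq2q : q ^ 2 ≤ q := by nlinarith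
  set a : E2 := proj1 (γ 0) with hadef
  set b : E2 := proj1 (γ 1) with hbdef
  -- membership facts
  have hmem : ∀ s ∈ Icc (0:ℝ) 1, ‖proj1 (γ s)‖ ≤ 3/2 ∧
      γ s = mk3 (proj1 (γ s)) (u (proj1 (γ s))) := by
    intro s hs
    obtain ⟨x, hx, hγs⟩ := hγm hs
    have hpx : proj1 (γ s) = x := by rw [hγs]; rfl
    rw [hpx]; exact ⟨hx, hγs⟩
  have hγ0 : γ 0 = mk3 a (u a) := (hmem 0 ⟨le_refl 0, zero_le_one⟩).2
  have hγ1 : γ 1 = mk3 b (u b) := (hmem 1 ⟨zero_le_one, le_refl 1⟩).2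
  have ha32 : ‖a‖ ≤ 3/2 := (hmem 0 ⟨le_refl 0, zero_le_one⟩).1
  have hb32 : ‖b‖ ≤ 3/2 := (hmem 1 ⟨zero_le_one, le_refl 1⟩).1
  -- bounds on u and its derivative
  have hu_small : ∀ x : E2, ‖x‖ ≤ 3/2 → |u x| ≤ E := by
    intro x hx
    have := hbound x hx
    linarith [norm_nonneg (fderiv ℝ u x), norm_nonneg (iteratedFDeriv ℝ 2 u x)]
  have hDu : ∀ x : E2, ‖x‖ ≤ 3/2 → ‖fderiv ℝ u x‖ ≤ E := by
    intro x hx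
    have := hbound x hx
    linarith [abs_nonneg (u x), norm_nonneg (iteratedFDeriv ℝ 2 u x)]
  -- u is E-Lipschitz on the closed ball of radius 3/2
  have hulip : ∀ x ∈ closedBall (0:E2) (3/2), ∀ y ∈ closedBall (0:E2) (3/2),
      ‖u y - u x‖ ≤ E * ‖y - x‖ := by
    intro x hx y hy
    exact Convex.norm_image_sub_le_of_norm_fderiv_le
      (fun z _ => (hu.differentiable (by norm_num)).differentiableAt)
      (fun z hz => hDu z (by simpa [mem_closedBall, dist_zero_right] using hz))
      (convex_closedBall _ _) hx hy
  -- the lift F is (1+E)-Lipschitz on the closed ball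
  set F : E2 → R3 := fun x => mk3 x (u x) with hFdef
  have hFdist : ∀ x ∈ closedBall (0:E2) (3/2), ∀ y ∈ closedBall (0:E2) (3/2),
      dist (F x) (F y) ≤ (1 + E) * dist x y := by
    intro x hx y hy
    have h1 : dist (F x) (F y) ≤ ‖x - y‖ + |u x - u y| := dist_mk3_le _ _ _ _
    have h2 : |u x - u y| ≤ E * ‖x - y‖ := by
      have := hulip y hy x hx
      rwa [Real.norm_eq_abs] at this

    calc dist (F x) (F y) ≤ ‖x - y‖ + E * ‖x - y‖ := by linarith
      _ = (1 + E) * ‖x - y‖ := by ring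
      _ = (1 + E) * dist x y := by rw [dist_eq_norm]
  -- upper bound : Lr ≤ (1+E) * ‖b - a‖
  set Lr : ℝ := (eVariationOn γ (Icc 0 1)).toReal with hLrdef
  set g : ℝ → E2 := fun t => a + t • (b - a) with hgdef
  have hg0 : g 0 = a := by simp [hgdef]
  have hg1 : g 1 = b := by simp [hgdef]
  have hgmaps : ∀ t ∈ Icc (0:ℝ) 1, ‖g t‖ ≤ 1 := by
    intro t ht
    have hgt : g t = (1 - t) • a + t • b := by rw [hgdef]; module
    rw [hgt]
    calc ‖(1-t) • a + t • b‖ ≤ ‖(1-t) • a‖ + ‖t • b‖ := norm_add_le _ _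
      _ = |1-t| * ‖a‖ + |t| * ‖b‖ := by
          rw [norm_smul, norm_smul]; simp [Real.norm_eq_abs]
      _ = 1 := by
          rw [ha1, hb1, abs_of_nonneg (by linarith [ht.2]), abs_of_nonneg ht.1]; ring
  have hglip : LipschitzWith ‖b - a‖₊ g := by
    refine LipschitzWith.of_dist_le_mul (fun s t => ?_)
    have hst : g s - g t = (s - t) • (b - a) := by rw [hgdef]; module
    rw [dist_eq_norm, hst, norm_smul, Real.dist_eq, coe_nnnorm]
    rw [Real.norm_eq_abs]; ring_nf; rfl
  have hvar_id : eVariationOn (id : ℝ → ℝ) (Icc 0 1) ≤ ENNReal.ofReal 1 := by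
    have h := MonotoneOn.eVariationOn_le (f := (id:ℝ→ℝ)) (s := Icc (0:ℝ) 1)
      monotoneOn_id ⟨le_refl 0, zero_le_one⟩ ⟨zero_le_one, le_refl 1⟩
    simpa using h
  have hvar_g : eVariationOn g (Icc 0 1) ≤ ENNReal.ofReal ‖b - a‖ := by
    have h := LipschitzOnWith.comp_eVariationOn_le (hglip.lipschitzOnWith (s := Set.univ))
      (Set.mapsTo_univ (id:ℝ→ℝ) (Icc 0 1))
    calc eVariationOn g (Icc 0 1) = eVariationOn (g ∘ id) (Icc 0 1) := rfl
      _ ≤ ‖b-a‖₊ * eVariationOn (id:ℝ→ℝ) (Icc 0 1) := h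
      _ ≤ ‖b-a‖₊ * ENNReal.ofReal 1 := mul_le_mul_right hvar_id _
      _ = ENNReal.ofReal ‖b-a‖ := by
          rw [ENNReal.ofReal_one, mul_one, ofReal_norm, enorm_eq_nnnorm]
  have hFlip : LipschitzOnWith (1+E).toNNReal F (closedBall (0:E2) (3/2)) := by
    refine LipschitzOnWith.of_dist_le_mul (fun x hx y hy => ?_)
    rw [Real.coe_toNNReal _ (by positivity)]
    exact hFdist x hx y hy
  have hmapsg : MapsTo g (Icc (0:ℝ) 1) (closedBall (0:E2) (3/2)) := by
    intro t ht
    simp only [mem_closedBall, dist_zero_right]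
    linarith [hgmaps t ht]
  have hσvar : eVariationOn (F ∘ g) (Icc 0 1) ≤ ENNReal.ofReal ((1+E) * ‖b - a‖) := by
    calc eVariationOn (F ∘ g) (Icc 0 1)
        ≤ (1+E).toNNReal * eVariationOn g (Icc 0 1) := hFlip.comp_eVariationOn_le hmapsg
      _ ≤ (1+E).toNNReal * ENNReal.ofReal ‖b-a‖ := mul_le_mul_right hvar_g _
      _ = ENNReal.ofReal ((1+E) * ‖b-a‖) := by
          rw [ENNReal.ofReal_mul (by positivity)]; rfl
  have hFcont : Continuous F :=
    (WithLp.prod_continuous_toLp 2 E2 ℝ).comp (continuous_id.prodMk hu.continuous)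
  have hgcont : Continuous g := by
    apply continuous_const.add
    exact continuous_id.smul continuous_const
  have hσmem : (F ∘ g) ∈ {γ' : ℝ → R3 | ContinuousOn γ' (Icc 0 1) ∧
      MapsTo γ' (Icc 0 1) {p : R3 | ∃ x : E2, ‖x‖ ≤ 3 / 2 ∧ p = mk3 x (u x)} ∧
      γ' 0 = γ 0 ∧ γ' 1 = γ 1} := by
    refine ⟨(hFcont.comp hgcont).continuousOn, ?_, ?_, ?_⟩
    · intro t ht
      exact ⟨g t, by linarith [hgmaps t ht], rfl⟩
    · show F (g 0) = γ 0
      rw [hg0, hγ0]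
    · show F (g 1) = γ 1
      rw [hg1, hγ1]
  have hLub : Lr ≤ (1 + E) * ‖b - a‖ := by
    have h : eVariationOn γ (Icc 0 1) ≤ ENNReal.ofReal ((1+E) * ‖b-a‖) := by
      rw [hmin]
      exact le_trans (iInf₂_le (F ∘ g) hσmem) hσvar
    exact ENNReal.toReal_le_of_le_ofReal (by positivity) h
  -- splitting lower bound
  have hsplit : ∀ s ∈ Icc (0:ℝ) 1, dist (γ 0) (γ s) + dist (γ s) (γ 1) ≤ Lr := by
    intro s hs
    have h1 : edist (γ 0) (γ s) ≤ eVariationOn γ (Icc 0 s) :=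
      eVariationOn.edist_le γ ⟨le_refl 0, hs.1⟩ ⟨hs.1, le_refl s⟩
    have h2 : edist (γ s) (γ 1) ≤ eVariationOn γ (Icc s 1) :=
      eVariationOn.edist_le γ ⟨le_refl s, hs.2⟩ ⟨hs.2, le_refl 1⟩
    have h3 : eVariationOn γ (Icc 0 s) + eVariationOn γ (Icc s 1)
        = eVariationOn γ (Icc 0 1) := by
      rw [← eVariationOn.union γ (isGreatest_Icc hs.1) (isLeast_Icc hs.2),
        Icc_union_Icc_eq_Icc hs.1 hs.2]
    have h4 : edist (γ 0) (γ s) + edist (γ s) (γ 1) ≤ eVariationOn γ (Icc 0 1) := by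
      rw [← h3]; exact add_le_add h1 h2
    have h5 := ENNReal.toReal_mono hfin h4
    rw [ENNReal.toReal_add (edist_ne_top _ _) (edist_ne_top _ _)] at h5
    simpa [dist_edist] using h5
  -- per-point projected bound
  have hAB : ∀ s ∈ Icc (0:ℝ) 1, ‖proj1 (γ s) - a‖ + ‖proj1 (γ s) - b‖ ≤ Lr := by
    intro s hs
    have h1 := dist_proj1_le (γ 0) (γ s)
    have h2 := dist_proj1_le (γ s) (γ 1)
    rw [← hadef] at h1
    rw [← hbdef] at h2
    rw [dist_eq_norm, norm_sub_rev] at h1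
    rw [dist_eq_norm] at h2
    have h3 := hsplit s hs
    have h4 := dist_nonneg (x := γ 0) (y := γ s)
    have h5 := dist_nonneg (x := γ s) (y := γ 1)
    linarith [h1.trans (le_refl _), h2]
  -- lower bound on the length
  have hLlb : 2 - 2*E ≤ Lr := by
    have hx0 : ‖proj1 (γ t₀)‖ ≤ E := le_trans (norm_proj1_le _) hnear.le
    have h1 : 1 - E ≤ ‖proj1 (γ t₀) - a‖ := by
      have := norm_sub_norm_le a (proj1 (γ t₀))
      rw [norm_sub_rev] at this
      linarith [ha1 ▸ this]
    have h2 : 1 - E ≤ ‖proj1 (γ t₀) - b‖ := by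
      have := norm_sub_norm_le b (proj1 (γ t₀))
      rw [norm_sub_rev] at this
      linarith [hb1 ▸ this]
    linarith [hAB t₀ ht₀]
  have hE1 : E ≤ 1 := le_trans hEq2 (le_trans hq2q hqle1)
  -- a and b are nearly antipodal
  have hab2 : ‖a + b‖^2 ≤ 16 * E := by
    have hpar := parallelogram_law_with_norm ℝ a b
    have hrev : ‖a - b‖ = ‖b - a‖ := norm_sub_rev a b
    have hd : 2 - 2*E ≤ (1+E) * ‖b - a‖ := le_trans hLlb hLub
    rw [ha1, hb1, hrev] at hpar
    exact antipodal_aux (norm_nonneg _) hE0 hE1 (by linarith [hpar]) hd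
  have habn : ‖a + b‖ ≤ 4 * q^2 := by
    refine le_of_sq_le_sq ?_ (by positivity)
    rw [hEdef] at hab2
    calc ‖a + b‖^2 ≤ 16*q^4 := hab2
      _ = (4*q^2)^2 := by ring
  have hLr22 : Lr ≤ 2 + 2*E := by
    have hba : ‖b - a‖ ≤ 2 := by
      calc ‖b - a‖ ≤ ‖b‖ + ‖a‖ := norm_sub_le _ _
        _ = 2 := by rw [ha1, hb1]; norm_num
    calc Lr ≤ (1+E) * ‖b - a‖ := hLub
      _ ≤ (1+E) * 2 := mul_le_mul_of_nonneg_left hba (by linarith)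
      _ = 2 + 2*E := by ring
  have hsum2 : ∀ s ∈ Icc (0:ℝ) 1, ‖proj1 (γ s) - a‖ + ‖proj1 (γ s) + a‖ ≤ 2 + 6*q^2 := by
    intro s hs
    have h1 : ‖proj1 (γ s) + a‖ ≤ ‖proj1 (γ s) - b‖ + ‖a + b‖ := by
      have he : proj1 (γ s) + a = (proj1 (γ s) - b) + (a + b) := by module
      rw [he]; exact norm_add_le _ _
    have h2 := hAB s hs
    linarith [habn]
  -- orthogonal decompositions
  have hdecA : ∀ s : ℝ, ‖proj1 (γ s) - a‖^2 =
      (1 - ⟪proj1 (γ s), a⟫)^2 + ‖proj1 (γ s) - ⟪proj1 (γ s), a⟫ • a‖^2 := by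
    intro s
    have h := decomp a (proj1 (γ s)) ha1 1
    rw [one_smul] at h
    rw [h]; ring
  have hdecB : ∀ s : ℝ, ‖proj1 (γ s) + a‖^2 =
      (1 + ⟪proj1 (γ s), a⟫)^2 + ‖proj1 (γ s) - ⟪proj1 (γ s), a⟫ • a‖^2 := by
    intro s
    have h := decomp a (proj1 (γ s)) ha1 (-1)
    rw [neg_one_smul, sub_neg_eq_add] at h
    rw [h]; ring
  have hwbound : ∀ s ∈ Icc (0:ℝ) 1, (⟪proj1 (γ s), a⟫)^2 ≤ 1 →
      ‖proj1 (γ s) - ⟪proj1 (γ s), a⟫ • a‖ ≤ 3*q := by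
    intro s hs ht
    have hell := ellipse (norm_nonneg (proj1 (γ s) - a)) (norm_nonneg (proj1 (γ s) + a))
      (hdecA s) (hdecB s) (sq_nonneg _) ht (by positivity : (0:ℝ) ≤ 6*q^2) (hsum2 s hs)
    refine le_of_sq_le_sq ?_ (by positivity)
    have h9 : 6*q^2*(4+6*q^2)/4 ≤ (3*q)^2 := by nlinarith [hq1, hq0.le]
    linarith
  refine ⟨Submodule.span ℝ {a}, finrank_span_singleton ?_, ?_⟩
  · intro h
    rw [h] at ha1
    simp at ha1
  have himg : ∀ s ∈ Icc (0:ℝ) 1, ∀ c : E2, dist (γ s) (mk3 c 0) ≤ ‖proj1 (γ s) - c‖ + E := by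
    intro s hs c
    have hγs := (hmem s hs).2
    have hux := hu_small _ (hmem s hs).1
    calc dist (γ s) (mk3 c 0)
        = dist (mk3 (proj1 (γ s)) (u (proj1 (γ s)))) (mk3 c 0) := by rw [← hγs]
      _ ≤ ‖proj1 (γ s) - c‖ + |u (proj1 (γ s)) - 0| := dist_mk3_le _ _ _ _
      _ ≤ ‖proj1 (γ s) - c‖ + E := by rw [sub_zero]; linarith
  have hq4q : E ≤ q := le_trans hEq2 hq2q
  have h6q2 : 6*q^2 ≤ q := by nlinarith [hq1, hq0.le]
  have h13q2 : 13*q^2 ≤ q := by nlinarith [hq1, hq0.le]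
  refine lt_of_le_of_lt
    (Metric.hausdorffDist_le_of_mem_dist (r := 4*q) (by positivity) ?_ ?_) ?_
  · rintro p ⟨s, hs, rfl⟩
    rcases le_or_gt (⟪proj1 (γ s), a⟫ : ℝ) 1 with ht1 | ht1
    · rcases le_or_gt (-1 : ℝ) (⟪proj1 (γ s), a⟫ : ℝ) with ht2 | ht2
      · refine ⟨mk3 ((⟪proj1 (γ s), a⟫ : ℝ) • a) 0, ⟨?_, ?_, rfl⟩, ?_⟩
        · exact Submodule.smul_mem _ _ (Submodule.mem_span_singleton_self a)
        · show ‖(⟪proj1 (γ s), a⟫ : ℝ) • a‖ ≤ 1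
          rw [norm_smul, ha1, mul_one, Real.norm_eq_abs]
          exact abs_le.2 ⟨ht2, ht1⟩
        · have hw := hwbound s hs (by nlinarith : (⟪proj1 (γ s), a⟫ : ℝ)^2 ≤ 1)
          calc dist (γ s) (mk3 ((⟪proj1 (γ s), a⟫ : ℝ) • a) 0)
              ≤ ‖proj1 (γ s) - (⟪proj1 (γ s), a⟫ : ℝ) • a‖ + E := himg s hs _
            _ ≤ 3*q + E := by linarith
            _ ≤ 4*q := by linarith
      · refine ⟨mk3 (-a) 0, ⟨?_, ?_, rfl⟩, ?_⟩
        · exact Submodule.neg_mem _ (Submodule.mem_span_singleton_self a)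
        · show ‖(-a : E2)‖ ≤ 1
          rw [norm_neg, ha1]
        · have hA := hdecA s
          have hAge : 1 - (⟪proj1 (γ s), a⟫ : ℝ) ≤ ‖proj1 (γ s) - a‖ := by
            refine le_of_sq_le_sq ?_ (norm_nonneg _)
            rw [hA]
            nlinarith [sq_nonneg ‖proj1 (γ s) - (⟪proj1 (γ s), a⟫ : ℝ) • a‖]
          have hBle : ‖proj1 (γ s) + a‖ ≤ 6*q^2 := by
            have := hsum2 s hs
            linarith
          calc dist (γ s) (mk3 (-a) 0) ≤ ‖proj1 (γ s) - (-a)‖ + E := himg s hs _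
            _ = ‖proj1 (γ s) + a‖ + E := by rw [sub_neg_eq_add]
            _ ≤ 6*q^2 + E := by linarith
            _ ≤ 4*q := by linarith
    · refine ⟨mk3 a 0, ⟨Submodule.mem_span_singleton_self a, ?_, rfl⟩, ?_⟩
      · show ‖a‖ ≤ 1
        rw [ha1]
      · have hB := hdecB s
        have hBge : 1 + (⟪proj1 (γ s), a⟫ : ℝ) ≤ ‖proj1 (γ s) + a‖ := by
          refine le_of_sq_le_sq ?_ (norm_nonneg _)
          rw [hB]
          nlinarith [sq_nonneg ‖proj1 (γ s) - (⟪proj1 (γ s), a⟫ : ℝ) • a‖]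
        have hAle : ‖proj1 (γ s) - a‖ ≤ 6*q^2 := by
          have := hsum2 s hs
          linarith
        calc dist (γ s) (mk3 a 0) ≤ ‖proj1 (γ s) - a‖ + E := himg s hs _
          _ ≤ 4*q := by linarith
  · rintro p ⟨hpL, hpn, hp2⟩
    obtain ⟨r, hr⟩ := Submodule.mem_span_singleton.1 hpL
    have hp : p = mk3 (r • a) 0 := by
      rw [hr, ← hp2]
      rfl
    have hrle : |r| ≤ 1 := by
      have h := hpn
      rw [← hr, norm_smul, ha1, mul_one, Real.norm_eq_abs] at h
      exact h
    have hfc : ContinuousOn (fun s => (⟪proj1 (γ s), a⟫ : ℝ)) (Icc 0 1) :=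
      ContinuousOn.inner (lip_proj1.continuous.comp_continuousOn hγc) continuousOn_const
    have hf0 : (⟪proj1 (γ 0), a⟫ : ℝ) = 1 := by
      rw [← hadef, real_inner_self_eq_norm_sq, ha1]
      norm_num
    rcases le_or_gt (⟪proj1 (γ 1), a⟫ : ℝ) r with hr1 | hr1
    · have hmem' : r ∈ Icc (⟪proj1 (γ 1), a⟫ : ℝ) (⟪proj1 (γ 0), a⟫ : ℝ) :=
        ⟨hr1, by rw [hf0]; exact (abs_le.1 hrle).2⟩
      obtain ⟨s, hs, hfs⟩ := intermediate_value_Icc' zero_le_one hfc hmem'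
      refine ⟨γ s, mem_image_of_mem _ hs, ?_⟩
      rw [hp, dist_comm]
      have hfs' : (⟪proj1 (γ s), a⟫ : ℝ) = r := hfs
      have hw := hwbound s hs
        (by nlinarith [abs_le.1 hrle, hfs'] : (⟪proj1 (γ s), a⟫ : ℝ)^2 ≤ 1)
      calc dist (γ s) (mk3 (r • a) 0) ≤ ‖proj1 (γ s) - r • a‖ + E := himg s hs _
        _ = ‖proj1 (γ s) - (⟪proj1 (γ s), a⟫ : ℝ) • a‖ + E := by rw [hfs']
        _ ≤ 3*q + E := by linarith
        _ ≤ 4*q := by linarith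
    · refine ⟨γ 1, mem_image_of_mem _ ⟨zero_le_one, le_refl 1⟩, ?_⟩
      rw [hp, dist_comm]
      have h2 : ‖(r+1) • a‖ = r + 1 := by
        rw [norm_smul, ha1, mul_one, Real.norm_eq_abs,
          abs_of_nonneg (by linarith [(abs_le.1 hrle).1])]
      have h1 : ‖b - r • a‖ ≤ ‖a + b‖ + (r + 1) := by
        have he : b - r • a = (a + b) - (r+1) • a := by module
        calc ‖b - r • a‖ = ‖(a + b) - (r+1) • a‖ := by rw [he]
          _ ≤ ‖a + b‖ + ‖(r+1) • a‖ := norm_sub_le _ _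
          _ = ‖a + b‖ + (r + 1) := by rw [h2]
      have h3 : (⟪proj1 (γ 1), a⟫ : ℝ) + 1 = ‖a + b‖^2/2 := by
        rw [← hbdef]
        have hn := norm_add_sq_real a b
        rw [ha1, hb1] at hn
        rw [real_inner_comm]
        linarith [hn]
      have h4 : r + 1 ≤ 8*q^2 := by
        have hab4 : ‖a + b‖^2 ≤ 16*q^4 := by rw [hEdef] at hab2; exact hab2
        have h5 : (⟪proj1 (γ 1), a⟫ : ℝ) + 1 ≤ 8*q^4 := by rw [h3]; linarith
        have h8 : 8*q^4 ≤ 8*q^2 := by nlinarith [hq21, sq_nonneg q, sq_nonneg (q^2)]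
        linarith [hr1]
      calc dist (γ 1) (mk3 (r • a) 0)
          ≤ ‖proj1 (γ 1) - r • a‖ + E := himg 1 ⟨zero_le_one, le_refl 1⟩ _
        _ = ‖b - r • a‖ + E := by rw [← hbdef]
        _ ≤ (‖a + b‖ + (r+1)) + E := by linarith
        _ ≤ 4*q^2 + 8*q^2 + E := by linarith [habn]
        _ ≤ 4*q := by linarith [h13q2]
  · linarith [hqδ, hq0]


end
end

section
/- Let λ > 0, C ≥ 1, and C₀ > 0. Then there exists C₂ > 0, depending only on λ, C, and C₀, with the following property: for every continuous function F : ℝ → ℂ and every a ∈ ℂ with |a| ≤ C₀ such that |F(t)| ≤ 1/2 and |F(t) − a/t| ≤ C₀/t² for all t ≥ 3C, one has, for every t₁ ≥ 3C, |∫_{3C}^{t₁} (e^{−(iλt + F(t))} − e^{\overline{iλt + F(t)}}) dt| ≤ C₂. -/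
open intervalIntegral MeasureTheory Complex

lemma invsq_integral {b t₁ : ℝ} (hb : 0 < b) (hbt : b ≤ t₁) :
    ∫ t in b..t₁, (t ^ 2)⁻¹ = b⁻¹ - t₁⁻¹ := by
  have h0 : (0:ℝ) ∉ Set.uIcc b t₁ := by
    rw [Set.uIcc_of_le hbt]; rintro ⟨h1, -⟩; exact absurd h1 (not_le.2 hb)
  have h := integral_zpow (a := b) (b := t₁) (n := -2) (Or.inr ⟨by decide, h0⟩)
  have e : ∀ t : ℝ, t ^ (-2:ℤ) = (t ^ 2)⁻¹ := fun t => by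
    rw [zpow_neg]; norm_cast
  simp_rw [e] at h
  rw [h]
  norm_num
  ring

lemma invsq_intble {b t₁ : ℝ} (hb : 0 < b) (hbt : b ≤ t₁) :
    IntervalIntegrable (fun t : ℝ => (t ^ 2)⁻¹) volume b t₁ := by
  apply ContinuousOn.intervalIntegrable
  apply ContinuousOn.inv₀ (by fun_prop)
  intro x hx
  rw [Set.uIcc_of_le hbt] at hx
  nlinarith [hx.1]

lemma osc_bound {lam b t₁ : ℝ} (hlam : 0 < lam) (hb : 0 < b) (hbt : b ≤ t₁) :
    ‖∫ t in b..t₁, ((t:ℂ))⁻¹ * Complex.exp (-(Complex.I * lam * t))‖ ≤ 3 / (b * lam) := by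
  set u : ℝ → ℂ := fun t => ((t:ℂ))⁻¹ with hu_def
  set v : ℝ → ℂ := fun t => Complex.exp (-(Complex.I * lam * t)) * (Complex.I / lam) with hv_def
  set u' : ℝ → ℂ := fun t => -(((t:ℂ)) ^ 2)⁻¹ with hu'_def
  set v' : ℝ → ℂ := fun t => Complex.exp (-(Complex.I * lam * t)) with hv'_def
  have hpos : ∀ x ∈ Set.uIcc b t₁, 0 < x := by
    intro x hx; rw [Set.uIcc_of_le hbt] at hx; linarith [hx.1]
  have hlc : ((lam:ℂ)) ≠ 0 := Complex.ofReal_ne_zero.2 hlam.ne'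
  have hofReal : ∀ x : ℝ, HasDerivAt (fun t : ℝ => ((t:ℂ))) 1 x := fun x => by
    simpa using (hasDerivAt_id x).ofReal_comp
  have hu : ∀ x ∈ Set.uIcc b t₁, HasDerivAt u (u' x) x := by
    intro x hx
    have hx0 : ((x:ℂ)) ≠ 0 := Complex.ofReal_ne_zero.2 (hpos x hx).ne'
    exact (hasDerivAt_inv hx0).comp_ofReal
  have hv : ∀ x ∈ Set.uIcc b t₁, HasDerivAt v (v' x) x := by
    intro x hx
    have h1 : HasDerivAt (fun t : ℝ => -(Complex.I * lam * t)) (-(Complex.I * lam)) x := by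
      exact (((hofReal x).const_mul (Complex.I * lam)).neg).congr_deriv (by rw [mul_one])
    have := (h1.cexp).mul_const (Complex.I / lam)
    refine this.congr_deriv ?_
    rw [hv'_def]
    rw [mul_assoc, show (-(Complex.I * (lam:ℂ))) * (Complex.I / lam) = 1 from by
      field_simp; ring_nf; rw [Complex.I_sq]; ring]
    rw [mul_one]
  have hu'int : IntervalIntegrable u' volume b t₁ := by
    apply ContinuousOn.intervalIntegrable
    apply ContinuousOn.neg
    apply ContinuousOn.inv₀ (by fun_prop)
    intro x hx
    exact pow_ne_zero 2 (Complex.ofReal_ne_zero.2 (hpos x hx).ne')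
  have hv'int : IntervalIntegrable v' volume b t₁ :=
    (Complex.continuous_exp.comp (by fun_prop)).intervalIntegrable _ _
  have key := integral_mul_deriv_eq_deriv_mul hu hv hu'int hv'int
  have hnv : ∀ t : ℝ, ‖v t‖ = 1 / lam := by
    intro t
    rw [hv_def]
    simp only [norm_mul, Complex.norm_exp]
    have hre : (-(Complex.I * (lam:ℂ) * t)).re = 0 := by simp
    rw [hre, Real.exp_zero, one_mul, norm_div, Complex.norm_I, Complex.norm_real,
      Real.norm_eq_abs, abs_of_pos hlam]
  have h3 : ‖∫ x in b..t₁, u' x * v x‖ ≤ 1 / (b * lam) := by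
    have hbd : ∀ᵐ t ∂volume.restrict (Set.uIoc b t₁),
        ‖u' t * v t‖ ≤ (1 / lam) * (t ^ 2)⁻¹ := by
      apply ae_restrict_of_forall_mem measurableSet_uIoc
      intro t ht
      have ht' : 0 < t := by
        rw [Set.uIoc_of_le hbt] at ht; linarith [ht.1]
      rw [norm_mul, hnv]
      have : ‖u' t‖ = (t ^ 2)⁻¹ := by
        simp [hu'_def, map_inv₀, map_pow, abs_of_pos ht']
      rw [this]; rw [mul_comm]
    have hgint : IntervalIntegrable (fun t : ℝ => (1 / lam) * (t ^ 2)⁻¹) volume b t₁ :=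
      (invsq_intble hb hbt).const_mul _
    have := intervalIntegral.norm_integral_le_abs_of_norm_le hbd hgint
    refine this.trans ?_
    rw [intervalIntegral.integral_const_mul, invsq_integral hb hbt]
    have ht1 : 0 < t₁ := lt_of_lt_of_le hb hbt
    have h1 : t₁⁻¹ ≤ b⁻¹ := by gcongr
    have h2 : (0:ℝ) ≤ b⁻¹ - t₁⁻¹ := sub_nonneg.2 h1
    rw [_root_.abs_of_nonneg (mul_nonneg (by positivity) h2)]
    have h3 : 1 / lam * (b⁻¹ - t₁⁻¹) ≤ 1 / lam * b⁻¹ := by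
      apply mul_le_mul_of_nonneg_left _ (by positivity)
      have : (0:ℝ) < t₁⁻¹ := by positivity
      linarith
    refine h3.trans (le_of_eq ?_)
    field_simp
  rw [key]
  have hb1 : ‖u t₁ * v t₁‖ ≤ 1 / (b * lam) := by
    rw [norm_mul, hnv]
    have ht1 : 0 < t₁ := lt_of_lt_of_le hb hbt
    have : ‖u t₁‖ = t₁⁻¹ := by simp [hu_def, abs_of_pos ht1]
    rw [this]
    have h1 : t₁⁻¹ ≤ b⁻¹ := by gcongr
    calc t₁⁻¹ * (1 / lam) ≤ b⁻¹ * (1 / lam) := by gcongr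
      _ = 1 / (b * lam) := by field_simp
  have hb2 : ‖u b * v b‖ ≤ 1 / (b * lam) := by
    rw [norm_mul, hnv]
    have : ‖u b‖ = b⁻¹ := by simp [hu_def, abs_of_pos hb]
    rw [this]
    have : b⁻¹ * (1 / lam) = 1 / (b * lam) := by field_simp
    rw [this]
  calc ‖u t₁ * v t₁ - u b * v b - ∫ x in b..t₁, u' x * v x‖
      ≤ ‖u t₁ * v t₁ - u b * v b‖ + ‖∫ x in b..t₁, u' x * v x‖ := norm_sub_le _ _
    _ ≤ (‖u t₁ * v t₁‖ + ‖u b * v b‖) + ‖∫ x in b..t₁, u' x * v x‖ := by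
        gcongr; exact norm_sub_le _ _
    _ ≤ (1 / (b * lam) + 1 / (b * lam)) + 1 / (b * lam) := by gcongr
    _ = 3 / (b * lam) := by ring

/-- Key estimate in the proof of the final lemma of Section 4.1: for `λ > 0`, `C ≥ 1`,
`C₀ > 0` there is `C₂ > 0` (depending only on `λ, C, C₀`) so that for every continuous
`F : ℝ → ℂ` and `a ∈ ℂ` with `|a| ≤ C₀`, `|F(t)| ≤ 1/2` and `|F(t) − a/t| ≤ C₀/t²` for all
`t ≥ 3C`, one has `|∫_{3C}^{t₁} (e^{−(iλt + F(t))} − e^{conj(iλt + F(t))}) dt| ≤ C₂` for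
every `t₁ ≥ 3C`. -/
theorem stmt_7 (lam C C₀ : ℝ) (hlam : 0 < lam) (hC : 1 ≤ C) (hC₀ : 0 < C₀) :
    ∃ C₂ : ℝ, 0 < C₂ ∧
      ∀ F : ℝ → ℂ, Continuous F →
        ∀ a : ℂ, ‖a‖ ≤ C₀ →
          (∀ t : ℝ, 3 * C ≤ t →
            ‖F t‖ ≤ 1 / 2 ∧ ‖F t - a / (t : ℂ)‖ ≤ C₀ / t ^ 2) →
          ∀ t₁ : ℝ, 3 * C ≤ t₁ →
            ‖∫ t in (3 * C)..t₁,
              (Complex.exp (-(Complex.I * (lam : ℂ) * (t : ℂ) + F t)) -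
                Complex.exp ((starRingEnd ℂ) (Complex.I * (lam : ℂ) * (t : ℂ) + F t)))‖ ≤
              C₂ := by
  have hb3 : (3:ℝ) ≤ 3 * C := by linarith
  have hb : (0:ℝ) < 3 * C := by linarith
  set b : ℝ := 3 * C with hb_def
  set K : ℝ := 8 * C₀ ^ 2 + 2 * C₀ with hK_def
  have hK0 : 0 < K := by positivity
  refine ⟨2 * C₀ * (3 / (b * lam)) + K / b, by positivity, ?_⟩
  intro F hF a ha hFa t₁ ht₁
  have ht1 : 0 < t₁ := lt_of_lt_of_le hb ht₁
  set E : ℝ → ℂ := fun t => Complex.exp (-(Complex.I * lam * t)) with hE_def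
  set c : ℂ := (((-2) * a.re : ℝ) : ℂ) with hc_def
  set G : ℝ → ℂ := fun t =>
    Complex.exp (-(Complex.I * (lam : ℂ) * (t : ℂ) + F t)) -
      Complex.exp ((starRingEnd ℂ) (Complex.I * (lam : ℂ) * (t : ℂ) + F t)) with hG_def
  set r : ℝ → ℂ := fun t => G t - c * (((t:ℝ):ℂ)⁻¹ * E t) with hr_def
  -- rewriting of the integrand
  have hGsplit : ∀ t : ℝ, G t = E t * (Complex.exp (-(F t)) - Complex.exp ((starRingEnd ℂ) (F t))) := by
    intro t
    have e1 : -(Complex.I * (lam : ℂ) * (t : ℂ) + F t)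
        = -(Complex.I * lam * t) + (-(F t)) := by ring
    have e2 : (starRingEnd ℂ) (Complex.I * (lam : ℂ) * (t : ℂ) + F t)
        = -(Complex.I * lam * t) + (starRingEnd ℂ) (F t) := by
      simp [map_add, map_mul, Complex.conj_I, Complex.conj_ofReal]
    rw [hG_def, hE_def]
    beta_reduce
    rw [e1, e2, Complex.exp_add, Complex.exp_add]
    ring
  -- continuity / integrability
  have hEcont : Continuous E := Complex.continuous_exp.comp (by fun_prop)
  have hGcont : Continuous G := by
    apply Continuous.sub
    · exact Complex.continuous_exp.comp (by fun_prop)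
    · exact Complex.continuous_exp.comp (Complex.continuous_conj.comp (by fun_prop))
  have hosc_cont : ContinuousOn (fun t : ℝ => ((t:ℝ):ℂ)⁻¹ * E t) (Set.uIcc b t₁) := by
    apply ContinuousOn.mul _ hEcont.continuousOn
    apply ContinuousOn.inv₀ (by fun_prop)
    intro x hx
    rw [Set.uIcc_of_le ht₁] at hx
    exact Complex.ofReal_ne_zero.2 (by nlinarith [hx.1])
  have hosc_int : IntervalIntegrable (fun t : ℝ => ((t:ℝ):ℂ)⁻¹ * E t) volume b t₁ :=
    hosc_cont.intervalIntegrable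
  have hG_int : IntervalIntegrable G volume b t₁ := hGcont.intervalIntegrable _ _
  have hr_int : IntervalIntegrable r volume b t₁ :=
    hG_int.sub (hosc_int.const_mul c)
  -- split the integral
  have split : (∫ t in b..t₁, G t)
      = c * (∫ t in b..t₁, ((t:ℝ):ℂ)⁻¹ * E t) + ∫ t in b..t₁, r t := by
    rw [← intervalIntegral.integral_const_mul,
      ← intervalIntegral.integral_add (hosc_int.const_mul c) hr_int]
    apply intervalIntegral.integral_congr
    intro t ht
    simp only [hr_def]
    ring
  -- pointwise bound on r
  have hr_bound : ∀ t : ℝ, t ∈ Set.uIoc b t₁ → ‖r t‖ ≤ K * (t ^ 2)⁻¹ := by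
    intro t ht
    rw [Set.uIoc_of_le ht₁] at ht
    have htb : b ≤ t := le_of_lt ht.1
    have ht0 : (0:ℝ) < t := lt_of_lt_of_le hb htb
    have ht3 : (3:ℝ) ≤ t := le_trans hb3 htb
    obtain ⟨hF1, hF2⟩ := hFa t htb
    set z : ℂ := F t with hz_def
    -- |z| ≤ 2C₀ / t
    have hz_le : ‖z‖ ≤ 2 * C₀ / t := by
      have h1 : ‖z‖ ≤ ‖z - a / t‖ + ‖a / t‖ := by
        have := norm_add_le (z - a / (t:ℂ)) (a / (t:ℂ))
        rwa [sub_add_cancel] at this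
      have h2 : ‖a / (t:ℂ)‖ ≤ C₀ / t := by
        rw [norm_div, Complex.norm_real, Real.norm_eq_abs, abs_of_pos ht0]
        gcongr
      have h3 : C₀ / t ^ 2 ≤ C₀ / t := by
        apply div_le_div_of_nonneg_left hC₀.le ht0
        nlinarith
      calc ‖z‖ ≤ ‖z - a / t‖ + ‖a / t‖ := h1
        _ ≤ C₀ / t ^ 2 + C₀ / t := add_le_add hF2 h2
        _ ≤ C₀ / t + C₀ / t := by linarith
        _ = 2 * C₀ / t := by ring
    -- decompose ψ
    have hE1 : ‖E t‖ = 1 := by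
      rw [hE_def]
      simp only [Complex.norm_exp]
      have : (-(Complex.I * (lam:ℂ) * t)).re = 0 := by simp
      rw [this, Real.exp_zero]
    have hr_eq : r t = E t * ((Complex.exp (-z) - 1 - (-z))
        - (Complex.exp ((starRingEnd ℂ) z) - 1 - (starRingEnd ℂ) z)
        + (-(z + (starRingEnd ℂ) z) - c * ((t:ℝ):ℂ)⁻¹)) := by
      rw [hr_def]
      simp only [hGsplit t, ← hz_def]
      have hEne : E t ≠ 0 := by rw [hE_def]; exact Complex.exp_ne_zero _
      field_simp
      ring
    have hA : ‖Complex.exp (-z) - 1 - (-z)‖ ≤ ‖z‖ ^ 2 := by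
      have := Complex.norm_exp_sub_one_sub_id_le (x := -z) (by
        rw [norm_neg]; linarith)
      simpa [norm_neg] using this
    have hB : ‖Complex.exp ((starRingEnd ℂ) z) - 1 - (starRingEnd ℂ) z‖
        ≤ ‖z‖ ^ 2 := by
      have := Complex.norm_exp_sub_one_sub_id_le (x := (starRingEnd ℂ) z) (by
        rw [Complex.norm_conj]; linarith)
      simpa [Complex.norm_conj] using this
    have hw : ‖-(z + (starRingEnd ℂ) z) - c * ((t:ℝ):ℂ)⁻¹‖
        ≤ 2 * (C₀ / t ^ 2) := by
      have e1 : -(z + (starRingEnd ℂ) z) - c * ((t:ℝ):ℂ)⁻¹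
          = ((-2 * (z.re - a.re / t) : ℝ) : ℂ) := by
        rw [Complex.add_conj, hc_def]
        push_cast
        field_simp
        ring
      rw [e1, Complex.norm_real, Real.norm_eq_abs]
      have e2 : z.re - a.re / t = (z - a / (t:ℂ)).re := by
        simp [Complex.sub_re, Complex.div_ofReal_re]
      rw [abs_mul, e2]
      have h4 : |(z - a / (t:ℂ)).re| ≤ C₀ / t ^ 2 :=
        le_trans (Complex.abs_re_le_norm _) hF2
      calc |(-2:ℝ)| * |(z - a / (t:ℂ)).re| = 2 * |(z - a / (t:ℂ)).re| := by norm_num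
        _ ≤ 2 * (C₀ / t ^ 2) := by linarith
    rw [hr_eq, norm_mul, hE1, one_mul]
    have habs : ‖(Complex.exp (-z) - 1 - (-z))
        - (Complex.exp ((starRingEnd ℂ) z) - 1 - (starRingEnd ℂ) z)
        + (-(z + (starRingEnd ℂ) z) - c * ((t:ℝ):ℂ)⁻¹)‖
        ≤ ‖z‖ ^ 2 + ‖z‖ ^ 2 + 2 * (C₀ / t ^ 2) := by
      calc ‖_‖ ≤ ‖(Complex.exp (-z) - 1 - (-z))
            - (Complex.exp ((starRingEnd ℂ) z) - 1 - (starRingEnd ℂ) z)‖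
            + ‖-(z + (starRingEnd ℂ) z) - c * ((t:ℝ):ℂ)⁻¹‖ :=
          norm_add_le _ _
        _ ≤ (‖Complex.exp (-z) - 1 - (-z)‖
            + ‖Complex.exp ((starRingEnd ℂ) z) - 1 - (starRingEnd ℂ) z‖)
            + ‖-(z + (starRingEnd ℂ) z) - c * ((t:ℝ):ℂ)⁻¹‖ := by
          gcongr
          exact norm_sub_le _ _
        _ ≤ (‖z‖ ^ 2 + ‖z‖ ^ 2) + 2 * (C₀ / t ^ 2) := by
          gcongr
        _ = _ := by ring
    refine habs.trans ?_
    have hzsq : ‖z‖ ^ 2 ≤ (2 * C₀ / t) ^ 2 := by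
      apply pow_le_pow_left₀ (norm_nonneg z) hz_le
    have : (2 * C₀ / t) ^ 2 = 4 * C₀ ^ 2 / t ^ 2 := by ring
    rw [this] at hzsq
    have hfin : 4 * C₀ ^ 2 / t ^ 2 + 4 * C₀ ^ 2 / t ^ 2 + 2 * (C₀ / t ^ 2)
        = K * (t ^ 2)⁻¹ := by
      rw [hK_def]; field_simp; ring
    linarith
  -- bound the remainder integral
  have hr_norm : ‖∫ t in b..t₁, r t‖ ≤ K / b := by
    have hbd : ∀ᵐ t ∂MeasureTheory.volume.restrict (Set.uIoc b t₁),
        ‖r t‖ ≤ K * (t ^ 2)⁻¹ :=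
      MeasureTheory.ae_restrict_of_forall_mem measurableSet_uIoc hr_bound
    have hgint : IntervalIntegrable (fun t : ℝ => K * (t ^ 2)⁻¹) MeasureTheory.volume b t₁ :=
      (invsq_intble hb ht₁).const_mul _
    refine (intervalIntegral.norm_integral_le_abs_of_norm_le hbd hgint).trans ?_
    rw [intervalIntegral.integral_const_mul, invsq_integral hb ht₁]
    have h1 : t₁⁻¹ ≤ b⁻¹ := by gcongr
    have h2 : (0:ℝ) ≤ b⁻¹ - t₁⁻¹ := sub_nonneg.2 h1
    rw [_root_.abs_of_nonneg (mul_nonneg hK0.le h2)]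
    have h3 : K * (b⁻¹ - t₁⁻¹) ≤ K * b⁻¹ := by
      apply mul_le_mul_of_nonneg_left _ hK0.le
      have : (0:ℝ) < t₁⁻¹ := by positivity
      linarith
    refine h3.trans (le_of_eq ?_)
    rw [div_eq_mul_inv]
  -- conclude
  rw [split]
  have hosc : ‖∫ t in b..t₁, ((t:ℝ):ℂ)⁻¹ * E t‖ ≤ 3 / (b * lam) :=
    osc_bound hlam hb ht₁
  have hc_norm : ‖c‖ ≤ 2 * C₀ := by
    rw [hc_def, Complex.norm_real, Real.norm_eq_abs, abs_mul]
    have h5 : |a.re| ≤ C₀ := le_trans (Complex.abs_re_le_norm a) ha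
    calc |(-2:ℝ)| * |a.re| = 2 * |a.re| := by norm_num
      _ ≤ 2 * C₀ := by linarith
  calc ‖c * (∫ t in b..t₁, ((t:ℝ):ℂ)⁻¹ * E t) + ∫ t in b..t₁, r t‖
      ≤ ‖c * (∫ t in b..t₁, ((t:ℝ):ℂ)⁻¹ * E t)‖ + ‖∫ t in b..t₁, r t‖ := norm_add_le _ _
    _ = ‖c‖ * ‖∫ t in b..t₁, ((t:ℝ):ℂ)⁻¹ * E t‖ + ‖∫ t in b..t₁, r t‖ := by rw [norm_mul]
    _ ≤ 2 * C₀ * (3 / (b * lam)) + K / b := by gcongr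
end

section
/- Let C > 0. For each i ∈ ℕ let λ_i ∈ ℝ and let F_i : ℂ → ℂ be holomorphic on {z : |z| > C} with F_i(z) → 0 as |z| → ∞; likewise let λ_∞ ∈ ℝ and F_∞ : ℂ → ℂ be holomorphic on {z : |z| > C} with F_∞(z) → 0 as |z| → ∞. Set f_i(z) = iλ_i z + F_i(z) and f_∞(z) = iλ_∞ z + F_∞(z). If f_i converges to f_∞ uniformly on the circle {z : |z| = 3C/2} as i → ∞, then λ_i → λ_∞. -/
open Filter Metric Real

lemma aux_zero (C : ℝ) (hC : 0 < C) (H : ℂ → ℂ)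
    (hH : DifferentiableOn ℂ H {z : ℂ | C < ‖z‖})
    (hH0 : Tendsto H (comap (fun z : ℂ => ‖z‖) atTop) (nhds 0))
    {r : ℝ} (hr : C < r) :
    (∮ z in C(0, r), H z / z ^ 2) = 0 := by
  have hr0 : (0:ℝ) < r := hC.trans hr
  rw [← norm_eq_zero]
  have key : ∀ ε > (0:ℝ), ‖∮ z in C(0, r), H z / z ^ 2‖ ≤ ε := by
    intro ε hε
    set ε' : ℝ := ε * r / (2 * π + 1) with hε'def
    have hπ : (0:ℝ) < 2 * π + 1 := by positivity
    have hε' : 0 < ε' := by positivity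
    have hev := Metric.tendsto_nhds.mp hH0 ε' hε'
    rw [eventually_comap, eventually_atTop] at hev
    obtain ⟨M, hM⟩ := hev
    set R : ℝ := max r M with hRdef
    have hrR : r ≤ R := le_max_left _ _
    have hR0 : 0 < R := hr0.trans_le hrR
    have heq : (∮ z in C(0, R), H z / z ^ 2) = ∮ z in C(0, r), H z / z ^ 2 := by
      apply Complex.circleIntegral_eq_of_differentiable_on_annulus_off_countable hr0 hrR
        Set.countable_empty
      · have hsub : closedBall (0:ℂ) R \ ball 0 r ⊆ {z : ℂ | C < ‖z‖} := by
          intro z hz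
          have hz1 : r ≤ ‖z‖ := by simpa [Complex.dist_eq] using hz.2
          exact lt_of_lt_of_le hr (by simpa using hz1)
        refine ((hH.continuousOn.mono hsub).div (continuousOn_id.pow 2) ?_)
        intro z hz
        have hz2 : C < ‖z‖ := hsub hz
        have hz0 : z ≠ 0 := by
          intro h; rw [h] at hz2; simp at hz2; linarith
        exact pow_ne_zero _ hz0
      · intro z hz
        have hz1 : r < ‖z‖ := by
          have := hz.1.2
          simpa [Complex.dist_eq] using this
        have hz2 : C < ‖z‖ := lt_trans hr (by simpa using hz1)
        have hz0 : z ≠ 0 := by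
          intro h; rw [h] at hz2; simp at hz2; linarith
        have hopen : IsOpen {z : ℂ | C < ‖z‖} :=
          isOpen_lt continuous_const continuous_norm
        exact ((hH.differentiableAt (hopen.mem_nhds hz2))).div
          (differentiableAt_id.pow 2) (pow_ne_zero _ hz0)
    rw [← heq]
    have hbound : ‖∮ z in C(0, R), H z / z ^ 2‖ ≤ 2 * π * R * (ε' / R ^ 2) := by
      have := circleIntegral.norm_integral_le_of_norm_le_const (c := (0:ℂ)) (R := R)
        (C := ε' / R ^ 2) hR0.le (f := fun z => H z / z ^ 2) ?_
      · simpa [abs_of_pos hR0] using this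
      · intro z hz
        have hzn : ‖z‖ = R := by simpa [Complex.dist_eq] using hz
        have hHz : ‖H z‖ ≤ ε' := by
          have := hM R (le_max_right _ _) z (by simpa using hzn)
          simpa [dist_zero_right] using this.le
        rw [norm_div, norm_pow, hzn]
        exact div_le_div_of_nonneg_right hHz (by positivity) |>.trans_eq rfl
          |>.trans (le_refl _)
    refine hbound.trans ?_
    have h1 : 2 * π * R * (ε' / R ^ 2) = 2 * π * ε' / R := by
      field_simp
    rw [h1, hε'def]
    rw [div_le_iff₀ hR0]
    have hπ0 : 0 < π := Real.pi_pos
    calc 2 * π * (ε * r / (2 * π + 1)) = (2 * π / (2 * π + 1)) * (ε * r) := by ring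
    _ ≤ 1 * (ε * r) := by
        apply mul_le_mul_of_nonneg_right _ (by positivity)
        rw [div_le_one hπ]; linarith
    _ = ε * r := by ring
    _ ≤ ε * R := by nlinarith
  exact le_antisymm (le_of_forall_pos_le_add fun ε hε => by simpa using key ε hε)
    (norm_nonneg _)


/-- Deduction in Section 4.1: if `f_i(z) = iλ_i z + F_i(z)` with `F_i` holomorphic on
`{|z| > C}` vanishing at infinity (and likewise for the limit data), and `f_i → f_∞`
uniformly on the circle `{|z| = 3C/2}`, then `λ_i → λ_∞`. -/
theorem stmt_8 (C : ℝ) (hC : 0 < C) (lam : ℕ → ℝ) (F : ℕ → ℂ → ℂ)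
    (laminf : ℝ) (Finf : ℂ → ℂ)
    (hF : ∀ i, DifferentiableOn ℂ (F i) {z : ℂ | C < ‖z‖})
    (hF0 : ∀ i, Tendsto (F i) (comap (fun z : ℂ => ‖z‖) atTop) (nhds 0))
    (hFinf : DifferentiableOn ℂ Finf {z : ℂ | C < ‖z‖})
    (hFinf0 : Tendsto Finf (comap (fun z : ℂ => ‖z‖) atTop) (nhds 0))
    (hconv : TendstoUniformlyOn (fun i z => Complex.I * (lam i : ℂ) * z + F i z)
      (fun z => Complex.I * (laminf : ℂ) * z + Finf z) atTop
      {z : ℂ | ‖z‖ = 3 * C / 2}) :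
    Tendsto lam atTop (nhds laminf) := by
  set R : ℝ := 3 * C / 2 with hRdef
  have hCR : C < R := by rw [hRdef]; linarith
  have hR0 : (0:ℝ) < R := hC.trans hCR
  have hsph : {z : ℂ | ‖z‖ = R} = Metric.sphere (0:ℂ) R := by
    ext z; simp [Complex.dist_eq]
  rw [Metric.tendsto_atTop]
  intro ε hε
  have hε' : (0:ℝ) < ε * R / 2 := by positivity
  have hev := (Metric.tendstoUniformlyOn_iff.mp hconv) (ε * R / 2) hε'
  rw [eventually_atTop] at hev
  obtain ⟨N, hN⟩ := hev
  refine ⟨N, fun i hi => ?_⟩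
  -- the difference function
  set G : ℂ → ℂ := fun z => F i z - Finf z with hGdef
  set Δ : ℂ := Complex.I * ((lam i : ℂ) - laminf) with hΔdef
  have hG : DifferentiableOn ℂ G {z : ℂ | C < ‖z‖} := (hF i).sub hFinf
  have hG0 : Tendsto G (comap (fun z : ℂ => ‖z‖) atTop) (nhds 0) := by
    have := (hF0 i).sub hFinf0
    simpa using this
  have hzero : (∮ z in C(0, R), G z / z ^ 2) = 0 := aux_zero C hC G hG hG0 hCR
  -- integrability
  have hzne : ∀ z ∈ Metric.sphere (0:ℂ) R, z ≠ 0 := by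
    intro z hz h0
    rw [h0] at hz
    simp [Metric.mem_sphere, dist_zero_right] at hz
    linarith
  have hGcont : ContinuousOn G (Metric.sphere (0:ℂ) R) := by
    apply hG.continuousOn.mono
    intro z hz
    have hzn : ‖z‖ = R := by simpa [Complex.dist_eq] using hz
    simp only [Set.mem_setOf_eq, hzn]
    exact hCR
  have hint1 : CircleIntegrable (fun z : ℂ => Δ * z⁻¹) 0 R := by
    apply ContinuousOn.circleIntegrable hR0.le
    exact continuousOn_const.mul (continuousOn_id.inv₀ hzne)
  have hint2 : CircleIntegrable (fun z : ℂ => G z / z ^ 2) 0 R := by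
    apply ContinuousOn.circleIntegrable hR0.le
    exact hGcont.div (continuousOn_id.pow 2) (fun z hz => pow_ne_zero _ (hzne z hz))
  -- compute the integral of the difference
  have hIcalc : (∮ z in C(0, R), (Δ * z + G z) / z ^ 2) = Δ * (2 * Real.pi * Complex.I) := by
    have hcong : (∮ z in C(0, R), (Δ * z + G z) / z ^ 2)
        = ∮ z in C(0, R), (Δ * z⁻¹ + G z / z ^ 2) := by
      apply circleIntegral.integral_congr hR0.le
      intro z hz
      have h0 := hzne z hz
      field_simp
    rw [hcong]
    have hsum : CircleIntegrable (fun z : ℂ => Δ * z⁻¹ + G z / z ^ 2) 0 R :=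
      ContinuousOn.circleIntegrable hR0.le
        ((continuousOn_const.mul (continuousOn_id.inv₀ hzne)).add
          (hGcont.div (continuousOn_id.pow 2) (fun z hz => pow_ne_zero _ (hzne z hz))))
    have hsub := circleIntegral.integral_sub hsum hint2
    have hΔint : (∮ z in C(0, R), Δ * z⁻¹)
        = (∮ z in C(0, R), (Δ * z⁻¹ + G z / z ^ 2)) - (∮ z in C(0, R), G z / z ^ 2) := by
      rw [← hsub]
      exact (circleIntegral.integral_congr hR0.le (fun z hz => by ring)).symm
    rw [hzero, sub_zero] at hΔint
    rw [← hΔint]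
    have hsmul := circleIntegral.integral_smul (𝕜 := ℂ) Δ (fun z : ℂ => z⁻¹) 0 R
    simp only [smul_eq_mul] at hsmul
    rw [hsmul]
    have h2 : (∮ z in C(0, R), z⁻¹) = 2 * Real.pi * Complex.I := by
      have := circleIntegral.integral_sub_inv_of_mem_ball
        (c := (0:ℂ)) (w := 0) (R := R) (by simpa using hR0)
      simpa using this
    rw [h2]
  -- norm bound
  have hbound : ‖∮ z in C(0, R), (Δ * z + G z) / z ^ 2‖ ≤ 2 * Real.pi * R * (ε * R / 2 / R ^ 2) := by
    have := circleIntegral.norm_integral_le_of_norm_le_const (c := (0:ℂ)) (R := R)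
      (C := ε * R / 2 / R ^ 2) hR0.le (f := fun z => (Δ * z + G z) / z ^ 2) ?_
    · simpa [abs_of_pos hR0] using this
    · intro z hz
      have hzn : ‖z‖ = R := by simpa [Complex.dist_eq] using hz
      have hmem : z ∈ {z : ℂ | ‖z‖ = 3 * C / 2} := by
        simp only [Set.mem_setOf_eq, ← hRdef]
        simpa using hzn
      have hd := hN i hi z hmem
      have hnum : ‖Δ * z + G z‖ ≤ ε * R / 2 := by
        have heq2 : Δ * z + G z = (Complex.I * (lam i : ℂ) * z + F i z)
            - (Complex.I * (laminf : ℂ) * z + Finf z) := by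
          rw [hΔdef, hGdef]; ring
        rw [heq2, ← dist_eq_norm, dist_comm]
        exact hd.le
      rw [norm_div, norm_pow, hzn]
      exact div_le_div_of_nonneg_right hnum (by positivity)
  rw [hIcalc] at hbound
  have hnormΔ : ‖Δ * (2 * Real.pi * Complex.I)‖ = |lam i - laminf| * (2 * Real.pi) := by
    rw [hΔdef]
    have hc : ((lam i : ℂ) - (laminf : ℂ)) = ((lam i - laminf : ℝ) : ℂ) := by
      push_cast; ring
    rw [hc]
    simp only [norm_mul, Complex.norm_I, Complex.norm_real, Real.norm_eq_abs,
      Complex.norm_two]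
    rw [abs_of_nonneg Real.pi_nonneg]
    ring
  rw [hnormΔ] at hbound
  have hπ : (0:ℝ) < Real.pi := Real.pi_pos
  have hrhs : 2 * Real.pi * R * (ε * R / 2 / R ^ 2) = Real.pi * ε := by
    field_simp
  rw [hrhs] at hbound
  have h2 : Real.pi * (2 * |lam i - laminf|) ≤ Real.pi * ε := by linarith
  have h3 : 2 * |lam i - laminf| ≤ ε := le_of_mul_le_mul_left h2 hπ
  rw [Real.dist_eq]
  have := abs_nonneg (lam i - laminf)
  linarith
end

section
/- Let a, b ∈ ℝ³, let ε > 0, and let γ : [0,1] → ℝ³ be a continuous path with γ(0) = a, γ(1) = b, whose length (total variation) is at most |a − b| + ε. Then the Hausdorff distance between the image γ([0,1]) and the closed segment [a, b] = {(1−s)a + s b : s ∈ [0,1]} is at most √(ε(|a − b| + ε)). -/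
open Set Metric

lemma dist_sq_combo {E : Type*} [NormedAddCommGroup E] [InnerProductSpace ℝ E]
    (p a b : E) (u : ℝ) :
    dist p ((1-u)•a + u•b) ^ 2
      = (1-u)*dist p a^2 + u*dist p b^2 - u*(1-u)*dist a b^2 := by
  have h1 : p - ((1-u)•a + u•b) = (p - a) - u • (b - a) := by
    simp [sub_smul, smul_sub]; abel
  have h2 : p - b = (p - a) - (b - a) := by abel
  simp only [dist_eq_norm, h1, h2]
  rw [norm_sub_sq_real (p-a) (u • (b-a)), norm_sub_sq_real (p-a) (b-a),
    real_inner_smul_right, norm_smul, norm_sub_rev a b]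
  simp only [Real.norm_eq_abs, mul_pow, sq_abs]
  ring

lemma sq_sub_sq_le {s L ε : ℝ} (hL : 0 ≤ L) (h1 : L ≤ s) (h2 : s ≤ L + ε) (hε : 0 < ε) :
    s^2 - L^2 ≤ 2*ε*(L+ε) := by
  have h3 : (s-L)*(s+L) ≤ ε*(2*(L+ε)) :=
    mul_le_mul (by linarith) (by linarith) (by linarith) hε.le
  nlinarith

lemma algA {x y L ε : ℝ} (hx : 0 ≤ x) (hy : 0 ≤ y) (hL : 0 ≤ L) (hs : 0 < x + y)
    (h1 : L ≤ x + y) (h2 : x + y ≤ L + ε) (hε : 0 < ε) :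
    (1 - x/(x+y))*x^2 + (x/(x+y))*y^2 - (x/(x+y))*(1-(x/(x+y)))*L^2 ≤ ε*(L+ε) := by
  have hne : x + y ≠ 0 := hs.ne'
  have key : (1 - x/(x+y))*x^2 + (x/(x+y))*y^2 - (x/(x+y))*(1-(x/(x+y)))*L^2
      = x*y*((x+y)^2 - L^2)/(x+y)^2 := by field_simp; ring
  rw [key, div_le_iff₀ (by positivity)]
  have hA : (x+y)^2 - L^2 ≤ 2*ε*(L+ε) := sq_sub_sq_le hL h1 h2 hε
  have hB : x*y*((x+y)^2 - L^2) ≤ ((x+y)^2/4)*(2*ε*(L+ε)) :=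
    mul_le_mul (by nlinarith [sq_nonneg (x-y)]) hA (by nlinarith) (by positivity)
  nlinarith [mul_nonneg (mul_nonneg hε.le (by linarith : (0:ℝ) ≤ L + ε)) (sq_nonneg (x+y))]

lemma algB {x y L ε u : ℝ} (hx : 0 ≤ x) (hy : 0 ≤ y) (hL : 0 ≤ L)
    (hu0 : 0 ≤ u) (hu1 : u ≤ 1) (hd : x - y = (2*u-1)*L)
    (h1 : L ≤ x + y) (h2 : x + y ≤ L + ε) (hε : 0 < ε) :
    (1-u)*x^2 + u*y^2 - u*(1-u)*L^2 ≤ ε*(L+ε) := by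
  have hid : (1-u)*x^2 + u*y^2 - u*(1-u)*L^2
      = ((x+y)^2-L^2)/4 - (2*u-1)^2*L*((x+y)-L)/2 := by
    linear_combination ((x-y+(2*u-1)*L)/4 - (2*u-1)*(x+y)/2) * hd
  rw [hid]
  have hA : (x+y)^2 - L^2 ≤ 2*ε*(L+ε) := sq_sub_sq_le hL h1 h2 hε
  have hB : 0 ≤ (2*u-1)^2*L*((x+y)-L)/2 := by
    have := sub_nonneg.2 h1
    positivity
  nlinarith [mul_nonneg hε.le (by linarith : (0:ℝ) ≤ L + ε)]

/-- A nearly length-minimizing curve is Hausdorff close to the straight segment joining its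
endpoints: if `γ : [0,1] → ℝ³` is continuous with `γ(0) = a`, `γ(1) = b`, and its length
(total variation) is at most `|a − b| + ε`, then the Hausdorff distance between the image of
`γ` and the segment `[a, b]` is at most `√(ε(|a − b| + ε))`. -/
theorem stmt_9 (a b : EuclideanSpace ℝ (Fin 3)) (ε : ℝ) (hε : 0 < ε)
    (γ : ℝ → EuclideanSpace ℝ (Fin 3)) (hγ : ContinuousOn γ (Set.Icc 0 1))
    (h0 : γ 0 = a) (h1 : γ 1 = b)
    (hlen : eVariationOn γ (Set.Icc 0 1) ≤ ENNReal.ofReal (dist a b + ε)) :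
    Metric.hausdorffDist (γ '' Set.Icc 0 1) (segment ℝ a b) ≤
      Real.sqrt (ε * (dist a b + ε)) := by
  have hL : (0:ℝ) ≤ dist a b := dist_nonneg
  -- variation bound at each time
  have hvar : ∀ t ∈ Icc (0:ℝ) 1, dist (γ t) a + dist (γ t) b ≤ dist a b + ε := by
    intro t ht
    have hsplit := eVariationOn.Icc_add_Icc γ (s := Icc (0:ℝ) 1) ht.1 ht.2 ht
    have e1 : edist (γ t) (γ 0) ≤ eVariationOn γ (Icc (0:ℝ) 1 ∩ Icc 0 t) :=
      eVariationOn.edist_le γ ⟨ht, ht.1, le_refl t⟩ ⟨⟨le_refl 0, zero_le_one⟩, le_refl 0, ht.1⟩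
    have e2 : edist (γ t) (γ 1) ≤ eVariationOn γ (Icc (0:ℝ) 1 ∩ Icc t 1) :=
      eVariationOn.edist_le γ ⟨ht, le_refl t, ht.2⟩ ⟨⟨zero_le_one, le_refl 1⟩, ht.2, le_refl 1⟩
    have etot : edist (γ t) (γ 0) + edist (γ t) (γ 1) ≤ ENNReal.ofReal (dist a b + ε) := by
      calc edist (γ t) (γ 0) + edist (γ t) (γ 1)
          ≤ eVariationOn γ (Icc (0:ℝ) 1 ∩ Icc 0 t) + eVariationOn γ (Icc (0:ℝ) 1 ∩ Icc t 1) :=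
            add_le_add e1 e2
        _ = eVariationOn γ (Icc (0:ℝ) 1 ∩ Icc 0 1) := hsplit
        _ = eVariationOn γ (Icc (0:ℝ) 1) := by rw [Set.inter_self]
        _ ≤ ENNReal.ofReal (dist a b + ε) := hlen
    rw [edist_dist, edist_dist, ← ENNReal.ofReal_add dist_nonneg dist_nonneg,
      ENNReal.ofReal_le_ofReal_iff (by positivity)] at etot
    rwa [h0, h1] at etot
  refine Metric.hausdorffDist_le_of_mem_dist (Real.sqrt_nonneg _) ?_ ?_
  · -- every curve point is close to the segment
    rintro p ⟨t, ht, rfl⟩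
    set x := dist (γ t) a with hx
    set y := dist (γ t) b with hy
    have hxy : x + y ≤ dist a b + ε := hvar t ht
    have htri : dist a b ≤ x + y := by
      rw [hx, hy, dist_comm (γ t) a]
      exact dist_triangle a (γ t) b
    rcases eq_or_lt_of_le (by positivity : (0:ℝ) ≤ x + y) with hc | hs
    · refine ⟨a, left_mem_segment ℝ a b, ?_⟩
      have hx0 : x = 0 := by
        have := dist_nonneg (x := γ t) (y := a)
        have := dist_nonneg (x := γ t) (y := b)
        linarith [hc.symm]
      rw [← hx, hx0]
      exact Real.sqrt_nonneg _
    · set u := x / (x + y) with hu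
      have hu0 : 0 ≤ u := by positivity
      have hu1 : u ≤ 1 := by
        rw [hu, div_le_one hs]
        have : (0:ℝ) ≤ y := dist_nonneg
        linarith
      refine ⟨(1-u)•a + u•b, ⟨1-u, u, by linarith, hu0, by ring, rfl⟩, ?_⟩
      apply Real.le_sqrt_of_sq_le
      rw [dist_sq_combo]
      exact algA dist_nonneg dist_nonneg hL hs htri hxy hε
  · -- every segment point is close to the curve
    rintro q ⟨s, u, hs0, hu0, hsum, rfl⟩
    have hs1 : s = 1 - u := by linarith
    have hu1 : u ≤ 1 := by linarith
    set h : ℝ → ℝ := fun t => dist (γ t) a - dist (γ t) b with hh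
    have hcont : ContinuousOn h (Icc 0 1) :=
      (((continuous_id.dist continuous_const).sub
        (continuous_id.dist continuous_const)).comp_continuousOn hγ)
    have hmem : (2*u-1) * dist a b ∈ Icc (h 0) (h 1) := by
      constructor
      · simp only [hh, h0, dist_self, zero_sub]
        nlinarith [dist_nonneg (x := a) (y := b)]
      · simp only [hh, h1, dist_self, sub_zero, dist_comm b a]
        nlinarith [dist_nonneg (x := a) (y := b)]
    obtain ⟨t, ht, hteq⟩ := intermediate_value_Icc zero_le_one hcont hmem
    refine ⟨γ t, Set.mem_image_of_mem γ ht, ?_⟩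
    rw [hs1, dist_comm]
    apply Real.le_sqrt_of_sq_le
    rw [dist_sq_combo]
    have hxy : dist (γ t) a + dist (γ t) b ≤ dist a b + ε := hvar t ht
    have htri : dist a b ≤ dist (γ t) a + dist (γ t) b := by
      rw [dist_comm (γ t) a]
      exact dist_triangle a (γ t) b
    exact algB dist_nonneg dist_nonneg hL hu0 hu1 hteq htri hxy hε
end
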